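/- There exist ε₀ > 0 and functions μ : [0, ε₀) → ℝ and v : [0, ε₀) → ℝ^p with μ(0) = λⱼ, v(0) = γⱼ, ‖v(ε)‖ = 1 and A(ε) v(ε) = μ(ε) v(ε) for all ε ∈ [0, ε₀), such that, as ε → 0⁺, γⱼᵀ v(ε) = 1 − (ε²/2) (γⱼᵀ x)² · ( Σ_{ℓ ≠ j} (γ_ℓᵀ x)² / (λⱼ − λ_ℓ)² ) + o(ε²). (This is the PCA eigenvector perturbation in Theorem 2; the sum Σ_{ℓ≠j} (γ_ℓᵀx)²/(λⱼ−λ_ℓ)² equals xᵀ Mⱼ² x with Mⱼ = (λⱼ I_p − Σ)⁺.) -/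

import Mathlib

open Matrix Asymptotics Filter Topology

lemma auxP_vmv {p : ℕ} (a b u : Fin p → ℝ) :
    (vecMulVec a b).mulVec u = (b ⬝ᵥ u) • a := by
  ext i
  simp only [Matrix.mulVec, dotProduct, vecMulVec_apply, Pi.smul_apply, smul_eq_mul,
    Finset.sum_mul]
  exact Finset.sum_congr rfl fun k _ => by ring

lemma auxP_basis {p : ℕ} (γ : Fin p → Fin p → ℝ)
    (horth : ∀ i j, γ i ⬝ᵥ γ j = if i = j then (1 : ℝ) else 0)
    (u : Fin p → ℝ) (hu : ∀ m, γ m ⬝ᵥ u = 0) : u = 0 := by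
  classical
  set Q : Matrix (Fin p) (Fin p) ℝ := Matrix.of γ with hQ
  have hQQ : Q * Qᵀ = 1 := by
    ext m l
    have := horth m l
    simpa [Matrix.mul_apply, Matrix.transpose_apply, hQ, Matrix.one_apply,
      dotProduct] using this
  have hQ2 : Qᵀ * Q = 1 := mul_eq_one_comm.mp hQQ
  have h1 : Qᵀ *ᵥ (Q *ᵥ u) = u := by
    rw [Matrix.mulVec_mulVec, hQ2, Matrix.one_mulVec]
  have hQu : Q *ᵥ u = 0 := by
    ext m
    simpa [Matrix.mulVec, hQ] using hu m
  rw [← h1, hQu, Matrix.mulVec_zero]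

lemma auxP_ext {p : ℕ} (γ : Fin p → Fin p → ℝ)
    (horth : ∀ i j, γ i ⬝ᵥ γ j = if i = j then (1 : ℝ) else 0)
    (u v : Fin p → ℝ) (h : ∀ m, γ m ⬝ᵥ u = γ m ⬝ᵥ v) : u = v := by
  have := auxP_basis γ horth (u - v) fun m => by
    rw [dotProduct_sub, h m, sub_self]
  exact sub_eq_zero.mp this

lemma auxP_dsum {p : ℕ} (γ : Fin p → Fin p → ℝ)
    (horth : ∀ i j, γ i ⬝ᵥ γ j = if i = j then (1 : ℝ) else 0)
    (s : Finset (Fin p)) (c : Fin p → ℝ) (m : Fin p) :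
    γ m ⬝ᵥ (∑ ℓ ∈ s, c ℓ • γ ℓ) = if m ∈ s then c m else 0 := by
  classical
  have h1 : γ m ⬝ᵥ (∑ ℓ ∈ s, c ℓ • γ ℓ) = ∑ ℓ ∈ s, c ℓ * (γ m ⬝ᵥ γ ℓ) := by
    simp only [dotProduct, Finset.sum_apply, Pi.smul_apply, smul_eq_mul, Finset.mul_sum]
    rw [Finset.sum_comm]
    exact Finset.sum_congr rfl fun ℓ _ => Finset.sum_congr rfl fun i _ => by ring
  rw [h1]
  simp only [horth, mul_ite, mul_one, mul_zero]
  exact Finset.sum_ite_eq s m c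

lemma auxP_S {p : ℕ} (lam : Fin p → ℝ) (γ : Fin p → Fin p → ℝ)
    (Sig : Matrix (Fin p) (Fin p) ℝ)
    (hSig : Sig = ∑ ℓ, lam ℓ • vecMulVec (γ ℓ) (γ ℓ)) (u : Fin p → ℝ) :
    Sig.mulVec u = ∑ ℓ, (lam ℓ * (γ ℓ ⬝ᵥ u)) • γ ℓ := by
  subst hSig
  ext i
  simp only [Matrix.mulVec, dotProduct, Matrix.sum_apply, Matrix.smul_apply,
    vecMulVec_apply, smul_eq_mul, Finset.sum_apply, Pi.smul_apply, Finset.sum_mul,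
    Finset.mul_sum]
  rw [Finset.sum_comm]
  exact Finset.sum_congr rfl fun ℓ _ => Finset.sum_congr rfl fun k _ => by ring

lemma auxP_Sd {p : ℕ} (lam : Fin p → ℝ) (γ : Fin p → Fin p → ℝ)
    (horth : ∀ i j, γ i ⬝ᵥ γ j = if i = j then (1 : ℝ) else 0)
    (Sig : Matrix (Fin p) (Fin p) ℝ)
    (hSig : Sig = ∑ ℓ, lam ℓ • vecMulVec (γ ℓ) (γ ℓ)) (m : Fin p) (u : Fin p → ℝ) :
    γ m ⬝ᵥ Sig.mulVec u = lam m * (γ m ⬝ᵥ u) := by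
  rw [auxP_S lam γ Sig hSig u, auxP_dsum γ horth]
  simp

lemma auxP_sumdot {p : ℕ} (γ : Fin p → Fin p → ℝ) (s : Finset (Fin p)) (c : Fin p → ℝ)
    (u : Fin p → ℝ) :
    (∑ ℓ ∈ s, c ℓ • γ ℓ) ⬝ᵥ u = ∑ ℓ ∈ s, c ℓ * (γ ℓ ⬝ᵥ u) := by
  simp only [dotProduct, Finset.sum_apply, Pi.smul_apply, smul_eq_mul, Finset.mul_sum,
    Finset.sum_mul]
  rw [Finset.sum_comm]
  exact Finset.sum_congr rfl fun ℓ _ => Finset.sum_congr rfl fun i _ => by ring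

set_option maxHeartbeats 1000000 in
/-- Theorem 2 (PCA part): eigenvector perturbation of `A(ε) = (1-ε)Σ + ε x xᵀ`.
There is an eigenvalue/unit-eigenvector branch `(μ(ε), v(ε))` with `μ(0) = λⱼ`,
`v(0) = γⱼ` such that
`γⱼᵀ v(ε) = 1 - (ε²/2)(γⱼᵀx)² ∑_{ℓ≠j} (γ_ℓᵀx)²/(λⱼ-λ_ℓ)² + o(ε²)` as `ε → 0⁺`. -/
theorem stmt4 (p : ℕ) (hp : 0 < p)
    (lam : Fin p → ℝ) (γ : Fin p → Fin p → ℝ)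
    (hpos : ∀ ℓ, 0 < lam ℓ) (hanti : StrictAnti lam)
    (horth : ∀ i j, γ i ⬝ᵥ γ j = if i = j then (1 : ℝ) else 0)
    (Sig : Matrix (Fin p) (Fin p) ℝ)
    (hSig : Sig = ∑ ℓ, lam ℓ • vecMulVec (γ ℓ) (γ ℓ))
    (x : Fin p → ℝ) (j : Fin p) :
    ∃ ε₀ > (0 : ℝ), ∃ μ : ℝ → ℝ, ∃ v : ℝ → Fin p → ℝ,
      μ 0 = lam j ∧ v 0 = γ j ∧
      (∀ ε ∈ Set.Ico (0 : ℝ) ε₀,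
        v ε ⬝ᵥ v ε = 1 ∧
        ((1 - ε) • Sig + ε • vecMulVec x x).mulVec (v ε) = μ ε • v ε) ∧
      (fun ε : ℝ => γ j ⬝ᵥ v ε -
          (1 - ε ^ 2 / 2 * (γ j ⬝ᵥ x) ^ 2 *
            ∑ ℓ ∈ Finset.univ.erase j, (γ ℓ ⬝ᵥ x) ^ 2 / (lam j - lam ℓ) ^ 2))
        =o[𝓝[>] (0 : ℝ)] fun ε => ε ^ 2 := by
  classical
  have hSd : ∀ (m : Fin p) (u : Fin p → ℝ), γ m ⬝ᵥ Sig.mulVec u = lam m * (γ m ⬝ᵥ u) :=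
    auxP_Sd lam γ horth Sig hSig
  have hlamne : ∀ ℓ, ℓ ≠ j → lam j - lam ℓ ≠ 0 := fun ℓ h =>
    sub_ne_zero.2 fun he => h (hanti.injective he).symm
  set M : Matrix (Fin p) (Fin p) ℝ := vecMulVec x x - Sig with hM
  set c : Fin p → ℝ := fun ℓ => (γ j ⬝ᵥ x) * (γ ℓ ⬝ᵥ x) / (lam j - lam ℓ) with hc
  set w : Fin p → ℝ := ∑ ℓ ∈ Finset.univ.erase j, c ℓ • γ ℓ with hw
  have hMd : ∀ (m : Fin p) (u : Fin p → ℝ),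
      γ m ⬝ᵥ M.mulVec u = (x ⬝ᵥ u) * (γ m ⬝ᵥ x) - lam m * (γ m ⬝ᵥ u) := by
    intro m u
    rw [hM, Matrix.sub_mulVec, dotProduct_sub, hSd, auxP_vmv, dotProduct_smul]
    simp [smul_eq_mul, mul_comm]
  set G : (ℝ × ((Fin p → ℝ) × ℝ)) → (ℝ × ((Fin p → ℝ) × ℝ)) := fun u =>
    (u.1, (Sig.mulVec u.2.1 + u.1 • M.mulVec u.2.1 - u.2.2 • u.2.1,
      (∑ i, u.2.1 i * u.2.1 i) - 1)) with hG
  set a : ℝ × ((Fin p → ℝ) × ℝ) := (0, (γ j, lam j)) with ha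
  set Tfun : (ℝ × ((Fin p → ℝ) × ℝ)) → (ℝ × ((Fin p → ℝ) × ℝ)) := fun δ =>
    (δ.1, (Sig.mulVec δ.2.1 + δ.1 • M.mulVec (γ j) - lam j • δ.2.1 - δ.2.2 • γ j,
      2 * (γ j ⬝ᵥ δ.2.1))) with hTfun
  have hTadd : ∀ u v, Tfun (u + v) = Tfun u + Tfun v := by
    intro u v
    simp only [hTfun, Prod.fst_add, Prod.snd_add, Matrix.mulVec_add, dotProduct_add,
      Prod.mk_add_mk, Prod.mk.injEq]
    refine ⟨trivial, ?_, by ring⟩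
    module
  have hTsmul : ∀ (t : ℝ) u, Tfun (t • u) = t • Tfun u := by
    intro t u
    simp only [hTfun, Prod.smul_fst, Prod.smul_snd, Matrix.mulVec_smul, dotProduct_smul,
      Prod.smul_mk, smul_eq_mul, Prod.mk.injEq]
    refine ⟨trivial, ?_, by ring⟩
    module
  set T : (ℝ × ((Fin p → ℝ) × ℝ)) →ₗ[ℝ] (ℝ × ((Fin p → ℝ) × ℝ)) :=
    { toFun := Tfun, map_add' := hTadd, map_smul' := hTsmul } with hT
  have hTapp : ∀ z, T z = Tfun z := fun _ => rfl
  have hTinj : Function.Injective T := by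
    intro δ δ' hδδ
    have hker : ∀ z : ℝ × ((Fin p → ℝ) × ℝ), T z = 0 → z = 0 := by
      rintro ⟨de, dv, dm⟩ hz
      rw [hTapp, hTfun] at hz
      have h0 : de = 0 := congrArg Prod.fst hz
      subst h0
      have h1 : Sig.mulVec dv - lam j • dv - dm • γ j = 0 := by
        have := congrArg (fun z => z.2.1) hz
        simpa using this
      have h2 : γ j ⬝ᵥ dv = 0 := by
        have := congrArg (fun z => z.2.2) hz
        simp at this
        linarith
      have hdm : dm = 0 := by
        have h3 := congrArg (fun z => γ j ⬝ᵥ z) h1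
        simp [dotProduct_sub, dotProduct_smul, hSd, h2, horth] at h3
        linarith
      subst hdm
      have h3 : ∀ m, γ m ⬝ᵥ dv = 0 := by
        intro m
        by_cases hmj : m = j
        · subst hmj; exact h2
        · have h4 := congrArg (fun z => γ m ⬝ᵥ z) h1
          simp [dotProduct_sub, dotProduct_smul, hSd, horth, hmj] at h4
          have h5 : (lam m - lam j) * (γ m ⬝ᵥ dv) = 0 := by linarith
          have h6 : lam m - lam j ≠ 0 := fun he =>
            hmj (hanti.injective (by linarith : lam m = lam j))
          exact (mul_eq_zero.mp h5).resolve_left h6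
      have hdv : dv = 0 := auxP_basis γ horth dv h3
      simp [hdv, Prod.ext_iff]
    have := hker (δ - δ') (by rw [map_sub, hδδ, sub_self])
    exact sub_eq_zero.mp this
  have hTbij : Function.Bijective T :=
    ⟨hTinj, LinearMap.injective_iff_surjective.mp hTinj⟩
  set e : (ℝ × ((Fin p → ℝ) × ℝ)) ≃L[ℝ] (ℝ × ((Fin p → ℝ) × ℝ)) :=
    (LinearEquiv.ofBijective T hTbij).toContinuousLinearEquiv with he
  have hecoe : ∀ δ, (e : (ℝ × ((Fin p → ℝ) × ℝ)) →L[ℝ] (ℝ × ((Fin p → ℝ) × ℝ))) δ = Tfun δ :=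
    fun δ => rfl
  have hGd : HasStrictFDerivAt G
      (e : (ℝ × ((Fin p → ℝ) × ℝ)) →L[ℝ] (ℝ × ((Fin p → ℝ) × ℝ))) a := by
    set vL : (ℝ × ((Fin p → ℝ) × ℝ)) →L[ℝ] (Fin p → ℝ) :=
      (ContinuousLinearMap.fst ℝ (Fin p → ℝ) ℝ).comp
        (ContinuousLinearMap.snd ℝ ℝ ((Fin p → ℝ) × ℝ)) with hvL
    set mL : (ℝ × ((Fin p → ℝ) × ℝ)) →L[ℝ] ℝ :=
      (ContinuousLinearMap.snd ℝ (Fin p → ℝ) ℝ).comp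
        (ContinuousLinearMap.snd ℝ ℝ ((Fin p → ℝ) × ℝ)) with hmL
    set eL : (ℝ × ((Fin p → ℝ) × ℝ)) →L[ℝ] ℝ :=
      ContinuousLinearMap.fst ℝ ℝ ((Fin p → ℝ) × ℝ) with heL
    set SL : (ℝ × ((Fin p → ℝ) × ℝ)) →L[ℝ] (Fin p → ℝ) :=
      (LinearMap.toContinuousLinearMap (Matrix.mulVecLin Sig)).comp vL with hSL
    set ML : (ℝ × ((Fin p → ℝ) × ℝ)) →L[ℝ] (Fin p → ℝ) :=
      (LinearMap.toContinuousLinearMap (Matrix.mulVecLin M)).comp vL with hML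
    have h1 : HasStrictFDerivAt (fun u : ℝ × ((Fin p → ℝ) × ℝ) => Sig.mulVec u.2.1) SL a :=
      SL.hasStrictFDerivAt
    have h2 : HasStrictFDerivAt (fun u : ℝ × ((Fin p → ℝ) × ℝ) => u.1 • M.mulVec u.2.1)
        (eL a • ML + eL.smulRight (ML a)) a :=
      eL.hasStrictFDerivAt.smul ML.hasStrictFDerivAt
    have h3 : HasStrictFDerivAt (fun u : ℝ × ((Fin p → ℝ) × ℝ) => u.2.2 • u.2.1)
        (mL a • vL + mL.smulRight (vL a)) a :=
      mL.hasStrictFDerivAt.smul vL.hasStrictFDerivAt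
    have h4 : HasStrictFDerivAt
        (fun u : ℝ × ((Fin p → ℝ) × ℝ) => (∑ i, u.2.1 i * u.2.1 i) - 1)
        (∑ i, (((ContinuousLinearMap.proj i).comp vL) a • ((ContinuousLinearMap.proj i).comp vL)
          + ((ContinuousLinearMap.proj i).comp vL) a • ((ContinuousLinearMap.proj i).comp vL))) a := by
      refine HasStrictFDerivAt.sub_const
        (f := fun u : ℝ × ((Fin p → ℝ) × ℝ) => ∑ i, u.2.1 i * u.2.1 i) (c := 1) ?_
      refine HasStrictFDerivAt.fun_sum fun i _ => ?_
      exact ((ContinuousLinearMap.proj i).comp vL).hasStrictFDerivAt.mul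
        ((ContinuousLinearMap.proj i).comp vL).hasStrictFDerivAt
    have hbig := (HasStrictFDerivAt.prodMk eL.hasStrictFDerivAt (HasStrictFDerivAt.prodMk ((h1.add h2).sub h3) h4))
    rw [hG]
    refine hbig.congr_fderiv ?_
    refine ContinuousLinearMap.ext fun δ => ?_
    rw [hecoe, hTfun]
    simp only [ContinuousLinearMap.prod_apply, ContinuousLinearMap.add_apply,
      ContinuousLinearMap.comp_apply, ContinuousLinearMap.smul_apply,
      ContinuousLinearMap.smulRight_apply, ContinuousLinearMap.coe_fst',
      ContinuousLinearMap.coe_snd', ContinuousLinearMap.proj_apply,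
      Matrix.mulVecLin_apply, ContinuousLinearMap.sub_apply,
      ContinuousLinearMap.coe_sum', Finset.sum_apply,
      LinearMap.coe_toContinuousLinearMap, ha, smul_eq_mul]
    refine Prod.ext rfl (Prod.ext ?_ ?_)
    · show Sig.mulVec δ.2.1 + ((0:ℝ) • (M.mulVec δ.2.1) + δ.1 • M.mulVec (γ j))
        - (lam j • δ.2.1 + δ.2.2 • γ j) = _
      rw [zero_smul]
      show _ = Sig.mulVec δ.2.1 + δ.1 • M.mulVec (γ j) - lam j • δ.2.1 - δ.2.2 • γ j
      module
    · show (∑ i, (γ j i * δ.2.1 i + γ j i * δ.2.1 i)) = 2 * (γ j ⬝ᵥ δ.2.1)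
      simp only [dotProduct, Finset.mul_sum, two_mul, Finset.sum_add_distrib]
  -- value of G at the base point
  have hγγ : γ j ⬝ᵥ γ j = 1 := by rw [horth]; simp
  have hGa : G a = 0 := by
    have h1 : Sig.mulVec (γ j) = lam j • γ j := by
      refine auxP_ext γ horth _ _ fun m => ?_
      rw [hSd, dotProduct_smul]
      by_cases hmj : m = j <;> simp [horth, hmj]
    have h2 : (∑ i, γ j i * γ j i) = 1 := by
      simpa [dotProduct] using hγγ
    rw [hG, ha]
    show ((0 : ℝ), (Sig.mulVec (γ j) + (0 : ℝ) • M.mulVec (γ j) - lam j • γ j,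
      (∑ i, γ j i * γ j i) - 1)) = 0
    rw [h1, h2, zero_smul, add_zero, sub_self]
    simp only [sub_self]
    rfl
  -- the local inverse
  set ψ : (ℝ × ((Fin p → ℝ) × ℝ)) → (ℝ × ((Fin p → ℝ) × ℝ)) :=
    hGd.localInverse G e a with hψdef
  have hψa : ψ (G a) = a := hGd.localInverse_apply_image
  have hψ0 : ψ ((0 : ℝ), ((0 : Fin p → ℝ), (0 : ℝ))) = a := by
    rw [show ((0 : ℝ), ((0 : Fin p → ℝ), (0 : ℝ))) = G a from by rw [hGa]; rfl]
    exact hψa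
  have hright : ∀ᶠ u in 𝓝 (0 : ℝ × ((Fin p → ℝ) × ℝ)), G (ψ u) = u := by
    have h := hGd.eventually_right_inverse
    rwa [hGa] at h
  have htend : Filter.Tendsto (fun ε : ℝ => ((ε, (0, 0)) : ℝ × ((Fin p → ℝ) × ℝ)))
      (𝓝 0) (𝓝 0) := by
    have hcont : Continuous (fun ε : ℝ => ((ε, (0, 0)) : ℝ × ((Fin p → ℝ) × ℝ))) :=
      continuous_id.prodMk continuous_const
    exact hcont.tendsto 0
  have hev : ∀ᶠ ε : ℝ in 𝓝 0, G (ψ (ε, (0, 0))) = (ε, (0, 0)) := htend.eventually hright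
  obtain ⟨ε₀, hε₀, hball⟩ := Metric.eventually_nhds_iff.mp hev
  -- the Ico conditions
  have hIco : ∀ ε ∈ Set.Ico (0 : ℝ) ε₀,
      (ψ (ε, (0, 0))).2.1 ⬝ᵥ (ψ (ε, (0, 0))).2.1 = 1 ∧
      ((1 - ε) • Sig + ε • vecMulVec x x).mulVec ((ψ (ε, (0, 0))).2.1)
        = (ψ (ε, (0, 0))).2.2 • (ψ (ε, (0, 0))).2.1 := by
    intro ε hε
    have hd : dist ε (0 : ℝ) < ε₀ := by
      rw [Real.dist_eq, sub_zero, abs_of_nonneg hε.1]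
      exact hε.2
    have hGψ := hball hd
    rw [hG] at hGψ
    have hz0 : (ψ (ε, (0, 0))).1 = ε := congrArg Prod.fst hGψ
    have h1 := congrArg (fun q : ℝ × ((Fin p → ℝ) × ℝ) => q.2.1) hGψ
    have h2 := congrArg (fun q : ℝ × ((Fin p → ℝ) × ℝ) => q.2.2) hGψ
    simp only at h1 h2
    rw [hz0] at h1
    constructor
    · have h3 : (ψ (ε, (0, 0))).2.1 ⬝ᵥ (ψ (ε, (0, 0))).2.1 - 1 = 0 := by
        simpa [dotProduct] using h2
      linarith
    · have hA : ((1 - ε) • Sig + ε • vecMulVec x x).mulVec ((ψ (ε, (0, 0))).2.1)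
          = Sig.mulVec ((ψ (ε, (0, 0))).2.1) + ε • M.mulVec ((ψ (ε, (0, 0))).2.1) := by
        rw [hM, Matrix.add_mulVec, Matrix.smul_mulVec, Matrix.smul_mulVec,
          Matrix.sub_mulVec]
        module
      rw [hA]
      exact sub_eq_zero.mp h1
  -- values at 0
  have hv0 : (ψ ((0 : ℝ), (0, 0))).2.1 = γ j := by rw [hψ0, ha]
  have hμ0 : (ψ ((0 : ℝ), (0, 0))).2.2 = lam j := by rw [hψ0, ha]
  -- derivative of the branch
  set vL : (ℝ × ((Fin p → ℝ) × ℝ)) →L[ℝ] (Fin p → ℝ) :=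
    (ContinuousLinearMap.fst ℝ (Fin p → ℝ) ℝ).comp
      (ContinuousLinearMap.snd ℝ ℝ ((Fin p → ℝ) × ℝ)) with hvL
  set ιL : ℝ →L[ℝ] (ℝ × ((Fin p → ℝ) × ℝ)) :=
    ContinuousLinearMap.inl ℝ ℝ ((Fin p → ℝ) × ℝ) with hιL
  have hψd : HasStrictFDerivAt ψ
      ((e.symm : (ℝ × ((Fin p → ℝ) × ℝ)) →L[ℝ] (ℝ × ((Fin p → ℝ) × ℝ))))
      (0 : ℝ × ((Fin p → ℝ) × ℝ)) := by
    have h := hGd.to_localInverse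
    rwa [hGa] at h
  have hι : HasStrictFDerivAt (fun ε : ℝ => ((ε, (0, 0)) : ℝ × ((Fin p → ℝ) × ℝ))) ιL 0 :=
    ιL.hasStrictFDerivAt
  have hz : HasStrictFDerivAt (fun ε : ℝ => ψ (ε, (0, 0)))
      (((e.symm : (ℝ × ((Fin p → ℝ) × ℝ)) →L[ℝ] (ℝ × ((Fin p → ℝ) × ℝ)))).comp ιL) 0 :=
    HasStrictFDerivAt.comp (0 : ℝ) hψd hι
  have hvz : HasStrictFDerivAt (fun ε : ℝ => (ψ (ε, (0, 0))).2.1)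
      (vL.comp (((e.symm : (ℝ × ((Fin p → ℝ) × ℝ)) →L[ℝ] (ℝ × ((Fin p → ℝ) × ℝ)))).comp ιL)) 0 :=
    HasStrictFDerivAt.comp (0 : ℝ) vL.hasStrictFDerivAt hz
  -- the derivative value
  have hTw : Tfun (1, (w, (γ j ⬝ᵥ x) ^ 2 - lam j)) = (1, (0, 0)) := by
    rw [hTfun]
    refine Prod.ext rfl (Prod.ext ?_ ?_)
    · show Sig.mulVec w + (1 : ℝ) • M.mulVec (γ j) - lam j • w
        - ((γ j ⬝ᵥ x) ^ 2 - lam j) • γ j = 0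
      rw [one_smul]
      refine auxP_ext γ horth _ _ fun m => ?_
      rw [dotProduct_sub, dotProduct_sub, dotProduct_add, hSd, hMd, dotProduct_smul,
        dotProduct_smul, dotProduct_zero, hw, auxP_dsum γ horth (Finset.univ.erase j) c m]
      by_cases hmj : m = j
      · subst hmj
        rw [dotProduct_comm x (γ m)]
        simp [horth]
        ring
      · have h6 : lam j - lam m ≠ 0 := hlamne m hmj
        rw [dotProduct_comm x (γ j)]
        simp only [Finset.mem_erase, ne_eq, hmj, not_false_eq_true, Finset.mem_univ, and_self,
          if_true, horth, if_neg hmj, if_false, smul_eq_mul, mul_zero, sub_zero]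
        rw [hc]
        field_simp
        ring
    · show 2 * (γ j ⬝ᵥ w) = 0
      rw [hw, auxP_dsum γ horth]
      simp
  have hesymm : ∀ t : ℝ, e.symm ((t, (0, 0)) : ℝ × ((Fin p → ℝ) × ℝ))
      = t • ((1 : ℝ), (w, (γ j ⬝ᵥ x) ^ 2 - lam j)) := by
    intro t
    have h1 : e ((1 : ℝ), (w, (γ j ⬝ᵥ x) ^ 2 - lam j)) = ((1 : ℝ), (0, 0)) := hTw
    have h2 : e.symm ((1 : ℝ), ((0 : Fin p → ℝ), (0 : ℝ)))
        = ((1 : ℝ), (w, (γ j ⬝ᵥ x) ^ 2 - lam j)) := by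
      rw [← h1, ContinuousLinearEquiv.symm_apply_apply]
    have h3 : ((t, (0, 0)) : ℝ × ((Fin p → ℝ) × ℝ))
        = t • ((1 : ℝ), ((0 : Fin p → ℝ), (0 : ℝ))) := by
      simp [Prod.ext_iff]
    rw [h3, _root_.map_smul, h2]
  have hDv : ∀ t : ℝ,
      (vL.comp (((e.symm : (ℝ × ((Fin p → ℝ) × ℝ)) →L[ℝ] (ℝ × ((Fin p → ℝ) × ℝ)))).comp ιL)) t
        = t • w := by
    intro t
    have h0 : (vL.comp (((e.symm : (ℝ × ((Fin p → ℝ) × ℝ)) →L[ℝ]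
        (ℝ × ((Fin p → ℝ) × ℝ)))).comp ιL)) t
        = vL (e.symm ((t, (0, 0)) : ℝ × ((Fin p → ℝ) × ℝ))) := rfl
    rw [h0, hesymm t]
    rfl
  have hlo : (fun ε : ℝ => (ψ (ε, (0, 0))).2.1 - γ j - ε • w) =o[𝓝 (0 : ℝ)]
      (fun ε : ℝ => ε) := by
    have h := hvz.hasFDerivAt
    rw [hasFDerivAt_iff_isLittleO_nhds_zero] at h
    refine h.congr' (Filter.Eventually.of_forall fun t => ?_) Filter.EventuallyEq.rfl
    show (ψ (0 + t, (0, 0))).2.1 - (ψ ((0 : ℝ), (0, 0))).2.1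
        - (vL.comp (((e.symm : (ℝ × ((Fin p → ℝ) × ℝ)) →L[ℝ]
          (ℝ × ((Fin p → ℝ) × ℝ)))).comp ιL)) t
      = (ψ (t, (0, 0))).2.1 - γ j - t • w
    rw [zero_add, hv0, hDv t]
  -- the sum S and dot products with w
  set S : ℝ := ∑ ℓ ∈ Finset.univ.erase j, (γ ℓ ⬝ᵥ x) ^ 2 / (lam j - lam ℓ) ^ 2 with hSdef
  have hγw : γ j ⬝ᵥ w = 0 := by
    rw [hw, auxP_dsum γ horth]
    simp
  have hwγ : w ⬝ᵥ γ j = 0 := by rw [dotProduct_comm]; exact hγw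
  have hww : w ⬝ᵥ w = (γ j ⬝ᵥ x) ^ 2 * S := by
    have h2 : w ⬝ᵥ w = ∑ ℓ ∈ Finset.univ.erase j, c ℓ * (γ ℓ ⬝ᵥ w) :=
      auxP_sumdot γ (Finset.univ.erase j) c w
    rw [h2]
    have h3 : ∀ ℓ ∈ Finset.univ.erase j, c ℓ * (γ ℓ ⬝ᵥ w)
        = (γ j ⬝ᵥ x) ^ 2 * ((γ ℓ ⬝ᵥ x) ^ 2 / (lam j - lam ℓ) ^ 2) := by
      intro ℓ hℓ
      have hℓj : ℓ ≠ j := (Finset.mem_erase.mp hℓ).1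
      rw [hw, auxP_dsum γ horth, if_pos hℓ, hc]
      have h6 := hlamne ℓ hℓj
      field_simp
    rw [Finset.sum_congr rfl h3, hSdef, Finset.mul_sum]
  -- package the existential
  refine ⟨ε₀, hε₀, fun ε => (ψ (ε, (0, 0))).2.2, fun ε => (ψ (ε, (0, 0))).2.1,
    hμ0, hv0, hIco, ?_⟩
  -- final asymptotics
  have hlo' : (fun ε : ℝ => (ψ (ε, (0, 0))).2.1 - γ j - ε • w) =o[𝓝[>] (0 : ℝ)]
      (fun ε : ℝ => ε) := hlo.mono nhdsWithin_le_nhds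
  have h2w : (fun ε : ℝ => ε • ((2 : ℝ) • w)) =O[𝓝[>] (0 : ℝ)] (fun ε : ℝ => ε) := by
    refine Asymptotics.IsBigO.of_bound ‖(2 : ℝ) • w‖ (Filter.Eventually.of_forall fun ε => ?_)
    rw [norm_smul]
    exact le_of_eq (mul_comm _ _)
  have hbigO : (fun ε : ℝ => (ψ (ε, (0, 0))).2.1 - γ j + ε • w) =O[𝓝[>] (0 : ℝ)]
      (fun ε : ℝ => ε) := by
    have hadd := hlo'.isBigO.add h2w
    refine hadd.congr' (Filter.Eventually.of_forall fun ε => ?_) Filter.EventuallyEq.rfl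
    show (ψ (ε, (0, 0))).2.1 - γ j - ε • w + ε • ((2 : ℝ) • w)
      = (ψ (ε, (0, 0))).2.1 - γ j + ε • w
    module
  have hcoord1 : ∀ i : Fin p,
      (fun ε : ℝ => ((ψ (ε, (0, 0))).2.1 - γ j - ε • w) i) =o[𝓝[>] (0 : ℝ)]
        (fun ε : ℝ => ε) := by
    intro i
    refine Asymptotics.IsBigO.trans_isLittleO ?_ hlo'
    exact Asymptotics.isBigO_of_le _ fun ε =>
      norm_le_pi_norm ((ψ (ε, (0, 0))).2.1 - γ j - ε • w) i
  have hcoord2 : ∀ i : Fin p,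
      (fun ε : ℝ => ((ψ (ε, (0, 0))).2.1 - γ j + ε • w) i) =O[𝓝[>] (0 : ℝ)]
        (fun ε : ℝ => ε) := by
    intro i
    refine Asymptotics.IsBigO.trans ?_ hbigO
    exact Asymptotics.isBigO_of_le _ fun ε =>
      norm_le_pi_norm ((ψ (ε, (0, 0))).2.1 - γ j + ε • w) i
  have hsum : (fun ε : ℝ => ∑ i, ((ψ (ε, (0, 0))).2.1 - γ j - ε • w) i
        * ((ψ (ε, (0, 0))).2.1 - γ j + ε • w) i) =o[𝓝[>] (0 : ℝ)]
      (fun ε : ℝ => ε ^ 2) := by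
    have h := Asymptotics.IsLittleO.sum
      (fun i (_ : i ∈ (Finset.univ : Finset (Fin p))) =>
        (hcoord1 i).mul_isBigO (hcoord2 i))
    refine h.congr' (Filter.Eventually.of_forall fun ε => Finset.sum_apply ε _ _) (Filter.Eventually.of_forall fun ε => ?_)
    ring
  have hmem : ∀ᶠ ε : ℝ in 𝓝[>] (0 : ℝ), ε ∈ Set.Ioo (0 : ℝ) ε₀ :=
    Ioo_mem_nhdsGT_of_mem ⟨le_refl (0 : ℝ), hε₀⟩
  have hkey : (fun ε : ℝ => γ j ⬝ᵥ (ψ (ε, (0, 0))).2.1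
        - (1 - ε ^ 2 / 2 * (γ j ⬝ᵥ x) ^ 2 * S))
      =ᶠ[𝓝[>] (0 : ℝ)] (fun ε : ℝ => (-(1 : ℝ) / 2)
        * ∑ i, ((ψ (ε, (0, 0))).2.1 - γ j - ε • w) i
          * ((ψ (ε, (0, 0))).2.1 - γ j + ε • w) i) := by
    filter_upwards [hmem] with ε hε
    have hunit := (hIco ε ⟨le_of_lt hε.1, hε.2⟩).1
    have hdot : ∑ i, ((ψ (ε, (0, 0))).2.1 - γ j - ε • w) i
          * ((ψ (ε, (0, 0))).2.1 - γ j + ε • w) i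
        = ((ψ (ε, (0, 0))).2.1 - γ j - ε • w) ⬝ᵥ ((ψ (ε, (0, 0))).2.1 - γ j + ε • w) := rfl
    rw [hdot]
    have hVγ : (ψ (ε, (0, 0))).2.1 ⬝ᵥ γ j = γ j ⬝ᵥ (ψ (ε, (0, 0))).2.1 :=
      dotProduct_comm _ _
    have hwV : w ⬝ᵥ (ψ (ε, (0, 0))).2.1 = (ψ (ε, (0, 0))).2.1 ⬝ᵥ w :=
      dotProduct_comm _ _
    simp only [sub_dotProduct, dotProduct_sub, add_dotProduct, dotProduct_add,
      smul_dotProduct, dotProduct_smul, smul_eq_mul]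
    rw [hunit, hγγ, hγw, hwγ, hVγ, hwV, hww]
    ring
  exact (hsum.const_mul_left (-(1 : ℝ) / 2)).congr' hkey.symm Filter.EventuallyEq.rfl
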